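/- Let γ : ℝ → ℝ² be a C² unit-speed curve satisfying the separation bound. Then ‖γ''(s)‖ ≤ 1 for every s; that is, the curvature of the curve is everywhere at most 1. -/

import Mathlib

noncomputable section

/-- Rotation by π/2 in the plane: `J (x, y) = (-y, x)`. -/
def J (v : EuclideanSpace ℝ (Fin 2)) : EuclideanSpace ℝ (Fin 2) := WithLp.toLp 2 ![-(v 1), v 0]

lemma second_deriv_nonneg_of_min (f : ℝ → ℝ) (hf : ContDiff ℝ 2 f) (s : ℝ)
    (h0 : f s = 0) (h1 : deriv f s = 0) (hnn : ∀ t, 0 ≤ f t) :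
    0 ≤ deriv (deriv f) s := by
  by_contra h
  push_neg at h
  have hf' : ContDiff ℝ ((1 : WithTop ℕ∞) + 1) f := by convert hf using 2; norm_num
  have hd1 : ContDiff ℝ 1 (deriv f) := (contDiff_succ_iff_deriv.mp hf').2.2
  have hcont : Continuous (deriv (deriv f)) := hd1.continuous_deriv le_rfl
  have hev : ∀ᶠ t in nhds s, deriv (deriv f) t < 0 :=
    (hcont.continuousAt).eventually_lt continuousAt_const h
  obtain ⟨ε, hε, hball⟩ := Metric.eventually_nhds_iff.mp hev
  set δ := ε / 2 with hδ
  have hδpos : 0 < δ := by positivity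
  have hIcc : ∀ t ∈ Set.Icc s (s + δ), deriv (deriv f) t < 0 := by
    intro t ht
    apply hball
    rw [Real.dist_eq, abs_lt]
    constructor
    · linarith [ht.1]
    · have := ht.2; simp only [hδ] at this ⊢; linarith
  have hanti : StrictAntiOn (deriv f) (Set.Icc s (s + δ)) := by
    apply strictAntiOn_of_deriv_neg (convex_Icc _ _) (hd1.continuous.continuousOn)
    intro t ht
    rw [interior_Icc] at ht
    exact hIcc t ⟨ht.1.le, ht.2.le⟩
  have hanti2 : StrictAntiOn f (Set.Icc s (s + δ)) := by
    apply strictAntiOn_of_deriv_neg (convex_Icc _ _) (hf.continuous.continuousOn)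
    intro t ht
    rw [interior_Icc] at ht
    have := hanti ⟨le_rfl, by linarith⟩ ⟨ht.1.le, ht.2.le⟩ ht.1
    rwa [h1] at this
  have hlt := hanti2 ⟨le_rfl, by linarith⟩ ⟨by linarith, le_rfl⟩ (by linarith)
  rw [h0] at hlt
  exact absurd (hnn (s + δ)) (not_le.mpr hlt)

lemma pythagJ (u w : EuclideanSpace ℝ (Fin 2)) (hu : ‖u‖ = 1) :
    ‖w‖ ^ 2 = (inner ℝ w u : ℝ) ^ 2 + (inner ℝ w (J u) : ℝ) ^ 2 := by
  have hu1 : (inner ℝ u u : ℝ) = 1 := by rw [real_inner_self_eq_norm_sq, hu]; norm_num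
  have hw : ‖w‖ ^ 2 = (inner ℝ w w : ℝ) := (real_inner_self_eq_norm_sq w).symm
  rw [hw]
  simp only [PiLp.inner_apply, RCLike.inner_apply, conj_trivial, Fin.sum_univ_two, J, PiLp.toLp_apply,
    Matrix.cons_val_zero, Matrix.cons_val_one, Matrix.head_cons] at hu1 ⊢
  nlinarith [hu1]

lemma inner_J_self (v : EuclideanSpace ℝ (Fin 2)) : (inner ℝ v (J v) : ℝ) = 0 := by
  simp only [PiLp.inner_apply, RCLike.inner_apply, conj_trivial, Fin.sum_univ_two, J, PiLp.toLp_apply,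
    Matrix.cons_val_zero, Matrix.cons_val_one, Matrix.head_cons]
  ring

lemma norm_J (v : EuclideanSpace ℝ (Fin 2)) : ‖J v‖ = ‖v‖ := by
  have h : (inner ℝ (J v) (J v) : ℝ) = (inner ℝ v v : ℝ) := by
    simp only [PiLp.inner_apply, RCLike.inner_apply, conj_trivial, Fin.sum_univ_two, J, PiLp.toLp_apply,
      Matrix.cons_val_zero, Matrix.cons_val_one, Matrix.head_cons]
    ring
  rw [real_inner_self_eq_norm_sq, real_inner_self_eq_norm_sq] at h
  nlinarith [norm_nonneg (J v), norm_nonneg v]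

/-- **Curvature bound** (Observation 2.6 (2)).  A C² unit-speed plane curve satisfying
the separation bound has curvature at most `1` everywhere: `‖γ'' s‖ ≤ 1`. -/
theorem curvature_le_one_of_separation
    (γ : ℝ → EuclideanSpace ℝ (Fin 2))
    (hC2 : ContDiff ℝ 2 γ)
    (hunit : ∀ s, ‖deriv γ s‖ = 1)
    (hsep : ∀ s t : ℝ, ∀ σ : ℝ, (σ = 1 ∨ σ = -1) →
      1 ≤ ‖γ t - (γ s + σ • J (deriv γ s))‖) :
    ∀ s : ℝ, ‖deriv (deriv γ) s‖ ≤ 1 := by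
  intro s
  have hC2' : ContDiff ℝ ((1 : WithTop ℕ∞) + 1) γ := by convert hC2 using 2; norm_num
  have hγdiff : Differentiable ℝ γ := hC2.differentiable (by norm_num)
  have hd1 : ContDiff ℝ 1 (deriv γ) := (contDiff_succ_iff_deriv.mp hC2').2.2
  have hddiff : Differentiable ℝ (deriv γ) := hd1.differentiable one_ne_zero
  set u := deriv γ s with hu
  set w := deriv (deriv γ) s with hw
  have hu1 : ‖u‖ = 1 := hunit s
  -- orthogonality: ⟪w, u⟫ = 0
  have hortho : (inner ℝ w u : ℝ) = 0 := by
    have hderiv : HasDerivAt (fun t => (inner ℝ (deriv γ t) (deriv γ t) : ℝ))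
        ((inner ℝ (deriv γ s) w : ℝ) + (inner ℝ w (deriv γ s) : ℝ)) s :=
      (hddiff s).hasDerivAt.inner ℝ (hddiff s).hasDerivAt
    have hconst : (fun t => (inner ℝ (deriv γ t) (deriv γ t) : ℝ)) = fun _ => (1 : ℝ) := by
      funext t
      rw [real_inner_self_eq_norm_sq, hunit]
      norm_num
    rw [hconst] at hderiv
    have h2 := hderiv.unique (hasDerivAt_const s 1)
    have h3 : (inner ℝ (deriv γ s) w : ℝ) = 0 := by
      have hc : (inner ℝ w (deriv γ s) : ℝ) = (inner ℝ (deriv γ s) w : ℝ) := real_inner_comm _ _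
      linarith [h2, hc]
    rw [hu, real_inner_comm]
    exact h3
  -- Lipschitz: ‖γ t - γ s‖ ≤ |t - s|
  have hlip : ∀ t : ℝ, ‖γ t - γ s‖ ≤ |t - s| := by
    intro t
    have := Convex.norm_image_sub_le_of_norm_deriv_le (s := Set.univ)
      (fun x _ => hγdiff x)
      (fun x _ => le_of_eq (hunit x)) convex_univ (Set.mem_univ s) (Set.mem_univ t)
    simpa [Real.norm_eq_abs] using this
  -- key inequality for each sign
  have hkey : ∀ σ : ℝ, (σ = 1 ∨ σ = -1) → σ * (inner ℝ w (J u) : ℝ) ≤ 1 := by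
    intro σ hσ
    set φ : ℝ → ℝ := fun t => (t - s) ^ 2 / 2 - σ * (inner ℝ (γ t - γ s) (J u) : ℝ) with hφ
    have hσsq : σ ^ 2 = 1 := by rcases hσ with h | h <;> rw [h] <;> norm_num
    have hφC2 : ContDiff ℝ 2 φ := by
      apply ContDiff.sub
      · exact ContDiff.div_const (by fun_prop) 2
      · exact ContDiff.mul contDiff_const
          ((hC2.sub contDiff_const).inner ℝ contDiff_const)
    have hφnn : ∀ t, 0 ≤ φ t := by
      intro t
      have h1 := hsep s t σ hσ
      have h2 : (1 : ℝ) ≤ ‖γ t - γ s - σ • J u‖ ^ 2 := by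
        have := h1
        have heq : γ t - (γ s + σ • J u) = γ t - γ s - σ • J u := by abel
        rw [heq] at this
        nlinarith [norm_nonneg (γ t - γ s - σ • J u)]
      rw [norm_sub_sq_real] at h2
      rw [norm_smul, norm_J, hu1] at h2
      rw [real_inner_smul_right] at h2
      have h3 : ‖σ‖ ^ 2 = 1 := by
        rcases hσ with h | h <;> rw [h] <;> simp
      have h4 : ‖γ t - γ s‖ ^ 2 ≤ (t - s) ^ 2 := by
        have := hlip t
        have habs : |t - s| ^ 2 = (t - s) ^ 2 := sq_abs _
        nlinarith [norm_nonneg (γ t - γ s)]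
      simp only [hφ]
      nlinarith [h2]
    have hφ0 : φ s = 0 := by simp [hφ]
    -- derivative of φ
    have hφderiv : ∀ t, HasDerivAt φ ((t - s) - σ * (inner ℝ (deriv γ t) (J u) : ℝ)) t := by
      intro t
      have h1 : HasDerivAt (fun t => (t - s) ^ 2 / 2) (t - s) t := by
        have : HasDerivAt (fun t : ℝ => t - s) 1 t :=
          (hasDerivAt_id t).sub_const s
        have := (this.pow 2).div_const 2
        refine this.congr_deriv ?_
        norm_num
      have h2 : HasDerivAt (fun t => (inner ℝ (γ t - γ s) (J u) : ℝ))
          (inner ℝ (deriv γ t) (J u) : ℝ) t := by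
        have hg : HasDerivAt (fun t => γ t - γ s) (deriv γ t) t :=
          (hγdiff t).hasDerivAt.sub_const (γ s)
        have := hg.inner ℝ (hasDerivAt_const t (J u))
        simpa using this
      exact h1.sub ((h2.const_mul σ))
    have hφd1 : deriv φ s = 0 := by
      rw [(hφderiv s).deriv, ← hu, inner_J_self]
      ring
    have hφdfun : deriv φ = fun t => (t - s) - σ * (inner ℝ (deriv γ t) (J u) : ℝ) := by
      funext t
      exact (hφderiv t).deriv
    have hφd2 : deriv (deriv φ) s = 1 - σ * (inner ℝ w (J u) : ℝ) := by
      rw [hφdfun]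
      have h1 : HasDerivAt (fun t : ℝ => t - s) 1 s := (hasDerivAt_id s).sub_const s
      have h2 : HasDerivAt (fun t => (inner ℝ (deriv γ t) (J u) : ℝ))
          (inner ℝ w (J u) : ℝ) s := by
        have := (hddiff s).hasDerivAt.inner ℝ (hasDerivAt_const s (J u))
        simpa [← hw] using this
      exact (h1.sub (h2.const_mul σ)).deriv
    have := second_deriv_nonneg_of_min φ hφC2 s hφ0 hφd1 hφnn
    rw [hφd2] at this
    linarith
  have hpos := hkey 1 (Or.inl rfl)
  have hneg := hkey (-1) (Or.inr rfl)
  have habs : (inner ℝ w (J u) : ℝ) ^ 2 ≤ 1 := by nlinarith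
  have := pythagJ u w hu1
  rw [hortho] at this
  nlinarith [norm_nonneg w]

end
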